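/- With g, h, R̄ as above (g increasing left-continuous bounded, R̄ = ∫₀¹ g, h continuous strictly increasing with h(0)=0 and h(∞) > (g(1)−g(0))/(R̄−g(0))), and F*(x) = g⁻¹([g(0) + (R̄ − g(0)) h(x)] ∧ g(1)), the feasibility identity ∫₀^∞ h(x) dF*(x) = 1 holds; equivalently ∫₀^{h(∞)} (1 − F*(h⁻¹(w))) dw = 1. -/

import Mathlib

open Set Filter Topology MeasureTheory

/-- Feasibility identity for the mean field equilibrium, in scale coordinates:
`∫₀^{h(∞)} (1 − F*(h⁻¹(w))) dw = 1`, i.e.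
`∫₀^∞ (1 − g⁻¹((g(0) + (R̄−g(0))w) ∧ g(1))) dw = 1`. -/
theorem stmt7 (g ginv : ℝ → ℝ) (Rbar : ℝ)
    (hmono : MonotoneOn g (Set.Icc 0 1))
    (hlc : ∀ y ∈ Set.Ioc (0:ℝ) 1,
      Filter.Tendsto g (nhdsWithin y (Set.Iio y)) (nhds (g y)))
    (hbdd : ∃ M, ∀ y ∈ Set.Icc (0:ℝ) 1, |g y| ≤ M)
    (hg01 : g 0 < g 1)
    (hRbar : Rbar = ∫ y in (0:ℝ)..1, g y)
    (hRmean : Rbar ∈ Set.Ioo (g 0) (g 1))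
    (hinv : ∀ z, z ≠ g 1 → ginv z = sInf {y | y ∈ Set.Icc (0:ℝ) 1 ∧ z < g y})
    (hinv1 : ginv (g 1) = 1) :
    ∫ w in Set.Ioi (0:ℝ),
      (1 - ginv (min (g 0 + (Rbar - g 0) * w) (g 1))) ∂MeasureTheory.volume = 1 := by
  set c : ℝ := Rbar - g 0 with hc_def
  have hc : 0 < c := sub_pos.2 hRmean.1
  -- clamped version of g
  set gt : ℝ → ℝ := fun y => g (max 0 (min y 1)) with hgt_def
  have hclamp_mem : ∀ y : ℝ, max 0 (min y 1) ∈ Set.Icc (0:ℝ) 1 := by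
    intro y
    constructor
    · exact le_max_left _ _
    · exact max_le (by norm_num) (min_le_right _ _)
  have hgt_mono : Monotone gt := by
    intro y y' hyy'
    exact hmono (hclamp_mem y) (hclamp_mem y')
      (max_le_max le_rfl (min_le_min hyy' le_rfl))
  have hgt_meas : Measurable gt := hgt_mono.measurable
  have hgt_eq : ∀ y ∈ Set.Icc (0:ℝ) 1, gt y = g y := by
    intro y hy
    simp only [hgt_def]
    rw [min_eq_left hy.2, max_eq_right hy.1]
  have hgt_le : ∀ y, gt y ≤ g 1 := fun y =>
    hmono (hclamp_mem y) (Set.right_mem_Icc.2 zero_le_one) (hclamp_mem y).2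
  have hgt_ge : ∀ y, g 0 ≤ gt y := fun y =>
    hmono (Set.left_mem_Icc.2 zero_le_one) (hclamp_mem y) (hclamp_mem y).1
  set μ : Measure ℝ := volume.restrict (Set.Ioc 0 1) with hμ_def
  haveI : IsFiniteMeasure μ := by
    constructor
    rw [hμ_def, Measure.restrict_apply_univ, Real.volume_Ioc]
    simp
  set f : ℝ → ℝ := fun y => gt y - g 0 with hf_def
  have hf_meas : Measurable f := hgt_meas.sub measurable_const
  have hf_nn : ∀ y, 0 ≤ f y := fun y => sub_nonneg.2 (hgt_ge y)
  have hf_bdd : ∀ y, |f y| ≤ g 1 - g 0 := by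
    intro y
    rw [abs_of_nonneg (hf_nn y)]
    exact sub_le_sub_right (hgt_le y) _
  have hf_int : Integrable f μ := by
    refine Integrable.mono' (integrable_const (g 1 - g 0)) hf_meas.aestronglyMeasurable ?_
    exact Filter.Eventually.of_forall hf_bdd
  -- the integral of f
  have hint_f : ∫ y, f y ∂μ = c := by
    have h1 : ∫ y, f y ∂μ = (∫ y, gt y ∂μ) - ∫ y, (g 0 : ℝ) ∂μ := by
      exact integral_sub (hf_int.add (integrable_const (g 0))
        |>.congr (Filter.Eventually.of_forall fun y => by simp [hf_def]))
        (integrable_const _)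
    have h2 : ∫ y, gt y ∂μ = ∫ y in Set.Ioc (0:ℝ) 1, g y := by
      refine setIntegral_congr_fun measurableSet_Ioc fun y hy => ?_
      exact hgt_eq y ⟨hy.1.le, hy.2⟩
    have h3 : ∫ y in Set.Ioc (0:ℝ) 1, g y = Rbar := by
      rw [hRbar, intervalIntegral.integral_of_le zero_le_one]
    have h4 : ∫ y, (g 0 : ℝ) ∂μ = g 0 := by
      rw [hμ_def, setIntegral_const, Real.volume_real_Ioc]
      simp
    rw [h1, h2, h3, h4]
  -- layer cake
  set G : ℝ → ℝ := fun t => ENNReal.toReal (μ {a : ℝ | t < f a}) with hG_def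
  have hlayer : ∫ t in Set.Ioi (0:ℝ), G t = c := by
    rw [← hint_f]
    exact (hf_int.integral_eq_integral_meas_lt
      (Filter.Eventually.of_forall hf_nn)).symm
  -- key pointwise identity
  have hkey : ∀ t : ℝ, 0 < t → G t = 1 - ginv (min (g 0 + t) (g 1)) := by
    intro t ht
    by_cases hcase : g 1 - g 0 ≤ t
    · have hmin : min (g 0 + t) (g 1) = g 1 :=
        min_eq_right (by linarith)
      rw [hmin, hinv1]
      have hempty : {a : ℝ | t < f a} = ∅ := by
        ext y
        simp only [Set.mem_setOf_eq, Set.mem_empty_iff_false, iff_false, not_lt, hf_def]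
        have := hgt_le y
        linarith
      rw [hG_def]
      simp [hempty]
    · push_neg at hcase
      set z : ℝ := g 0 + t with hz_def
      have hz1 : z < g 1 := by linarith
      have hmin : min (g 0 + t) (g 1) = z := min_eq_left hz1.le
      rw [hmin, hinv z hz1.ne]
      set S : Set ℝ := {y | y ∈ Set.Icc (0:ℝ) 1 ∧ z < g y} with hS_def
      have hS1 : (1:ℝ) ∈ S := ⟨Set.right_mem_Icc.2 zero_le_one, hz1⟩
      have hSne : S.Nonempty := ⟨1, hS1⟩
      have hSb : BddBelow S := ⟨0, fun y hy => hy.1.1⟩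
      set a : ℝ := sInf S with ha_def
      have ha0 : 0 ≤ a := le_csInf hSne fun y hy => hy.1.1
      have ha1 : a ≤ 1 := csInf_le hSb hS1
      -- the set {y | t < f y} within (0,1] squeezes between Ioc a 1 and Icc a 1
      have hsub1 : Set.Ioc a 1 ⊆ {y : ℝ | t < f y} ∩ Set.Ioc 0 1 := by
        intro y hy
        have hy01 : y ∈ Set.Ioc (0:ℝ) 1 := ⟨lt_of_le_of_lt ha0 hy.1, hy.2⟩
        have hyIcc : y ∈ Set.Icc (0:ℝ) 1 := ⟨hy01.1.le, hy01.2⟩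
        obtain ⟨y', hy'S, hy'lt⟩ := exists_lt_of_csInf_lt hSne hy.1
        have : z < g y := lt_of_lt_of_le hy'S.2 (hmono hy'S.1 hyIcc hy'lt.le)
        refine ⟨?_, hy01⟩
        simp only [Set.mem_setOf_eq, hf_def]
        rw [hgt_eq y hyIcc]
        linarith
      have hsub2 : {y : ℝ | t < f y} ∩ Set.Ioc 0 1 ⊆ Set.Icc a 1 := by
        intro y hy
        have hyIcc : y ∈ Set.Icc (0:ℝ) 1 := ⟨hy.2.1.le, hy.2.2⟩
        have hfy : t < f y := hy.1
        have : z < g y := by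
          simp only [hf_def] at hfy
          rw [hgt_eq y hyIcc] at hfy
          linarith
        exact ⟨csInf_le hSb ⟨hyIcc, this⟩, hyIcc.2⟩
      have hvol : μ {y : ℝ | t < f y} = ENNReal.ofReal (1 - a) := by
        rw [hμ_def, Measure.restrict_apply' measurableSet_Ioc]
        refine le_antisymm ?_ ?_
        · calc volume ({y : ℝ | t < f y} ∩ Set.Ioc 0 1)
              ≤ volume (Set.Icc a 1) := measure_mono hsub2
            _ = ENNReal.ofReal (1 - a) := Real.volume_Icc
        · calc ENNReal.ofReal (1 - a) = volume (Set.Ioc a 1) := Real.volume_Ioc.symm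
            _ ≤ volume ({y : ℝ | t < f y} ∩ Set.Ioc 0 1) := measure_mono hsub1
      rw [hG_def]
      simp only [hvol]
      rw [ENNReal.toReal_ofReal (by linarith)]
  -- conclude
  have hcongr : ∫ w in Set.Ioi (0:ℝ),
      (1 - ginv (min (g 0 + (Rbar - g 0) * w) (g 1))) ∂volume
      = ∫ w in Set.Ioi (0:ℝ), G (c * w) := by
    refine setIntegral_congr_fun measurableSet_Ioi fun w hw => ?_
    rw [hkey (c * w) (mul_pos hc hw)]
  rw [hcongr, integral_comp_mul_left_Ioi G 0 hc, mul_zero, hlayer]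
  simp [smul_eq_mul]
  field_simp
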